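/- Fix an integer k ≥ 1, data a₁,…,a_k ∈ (0,∞), z₁,…,z_k ∈ {0,1}, and fix β > 0. Let |z| = Σ_{i=1}^{k} z_i. Then as α → 0, ℓ_k(z|a,(α,β)) = O( |log α|^{|z|-k} · exp( -(1/(2β²)) Σ_{i=1}^{k} (1-z_i)(log a_i - log α)² ) ). -/

import Mathlib

open MeasureTheory Real Filter Set Topology

/-- The standard Gaussian cumulative distribution function. -/
noncomputable def Phi (x : ℝ) : ℝ :=
  (Real.sqrt (2 * Real.pi))⁻¹ * ∫ t in Set.Iic x, Real.exp (-t ^ 2 / 2)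

/-- The likelihood of the log-normal (probit) fragility model. -/
noncomputable def lik (k : ℕ) (a : Fin k → ℝ) (z : Fin k → ℕ) (α β : ℝ) : ℝ :=
  ∏ i, Phi (Real.log (a i / α) / β) ^ (z i) *
    (1 - Phi (Real.log (a i / α) / β)) ^ (1 - z i)

lemma gauss_eq : (fun t : ℝ => Real.exp (-t ^ 2 / 2)) = fun t : ℝ => Real.exp (-(1/2) * t ^ 2) := by
  funext t; ring_nf

lemma gauss_integrable : Integrable (fun t : ℝ => Real.exp (-t ^ 2 / 2)) := by
  rw [gauss_eq]; exact integrable_exp_neg_mul_sq (by norm_num)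

lemma gauss_total : (∫ t : ℝ, Real.exp (-t ^ 2 / 2)) = Real.sqrt (2 * Real.pi) := by
  rw [gauss_eq, integral_gaussian]; congr 1; ring

lemma sqrt_two_pi_pos : 0 < Real.sqrt (2 * Real.pi) :=
  Real.sqrt_pos.mpr (by positivity)

lemma one_le_sqrt_two_pi : 1 ≤ Real.sqrt (2 * Real.pi) := by
  have h1 : (1:ℝ) ≤ 2 * Real.pi := by nlinarith [Real.pi_gt_three]
  calc (1:ℝ) = Real.sqrt 1 := (Real.sqrt_one).symm
    _ ≤ Real.sqrt (2 * Real.pi) := Real.sqrt_le_sqrt h1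

lemma Phi_nonneg (x : ℝ) : 0 ≤ Phi x :=
  mul_nonneg (by positivity)
    (setIntegral_nonneg measurableSet_Iic fun t _ => (Real.exp_pos _).le)

lemma Phi_le_one (x : ℝ) : Phi x ≤ 1 := by
  have h1 : (∫ t in Set.Iic x, Real.exp (-t ^ 2 / 2)) ≤ Real.sqrt (2 * Real.pi) := by
    rw [← gauss_total]
    exact setIntegral_le_integral gauss_integrable
      (Eventually.of_forall fun t => (Real.exp_pos _).le)
  calc Phi x ≤ (Real.sqrt (2 * Real.pi))⁻¹ * Real.sqrt (2 * Real.pi) :=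
        mul_le_mul_of_nonneg_left h1 (inv_nonneg.mpr (Real.sqrt_nonneg _))
    _ = 1 := inv_mul_cancel₀ sqrt_two_pi_pos.ne'

lemma integral_exp_neg_mul_Ioi' {b : ℝ} (hb : 0 < b) (a : ℝ) :
    ∫ t in Set.Ioi a, Real.exp (-b * t) = Real.exp (-b * a) / b := by
  have hderiv : ∀ x ∈ Set.Ici a, HasDerivAt (fun t : ℝ => -Real.exp (-b * t) / b)
      (Real.exp (-b * x)) x := by
    intro x _
    have h1 : HasDerivAt (fun t : ℝ => -b * t) (-b) x := by
      simpa using (hasDerivAt_id x).const_mul (-b)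
    have h2 := (h1.exp).neg.div_const b
    refine h2.congr_deriv ?_
    field_simp
  have hint : IntegrableOn (fun t : ℝ => Real.exp (-b * t)) (Set.Ioi a) :=
    exp_neg_integrableOn_Ioi a hb
  have htend : Tendsto (fun t : ℝ => -Real.exp (-b * t) / b) atTop (𝓝 0) := by
    have h : Tendsto (fun t : ℝ => Real.exp (-b * t)) atTop (𝓝 0) :=
      Real.tendsto_exp_atBot.comp (tendsto_id.const_mul_atTop_of_neg (neg_lt_zero.mpr hb))
    simpa using (h.neg).div_const b
  have := integral_Ioi_of_hasDerivAt_of_tendsto' hderiv hint htend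
  rw [this]; ring

lemma one_sub_Phi_le {x : ℝ} (hx : 0 < x) :
    1 - Phi x ≤ Real.exp (-x ^ 2 / 2) / x := by
  have hsplit : (∫ t in Set.Iic x, Real.exp (-t ^ 2 / 2)) +
      (∫ t in Set.Ioi x, Real.exp (-t ^ 2 / 2)) = Real.sqrt (2 * Real.pi) := by
    rw [intervalIntegral.integral_Iic_add_Ioi gauss_integrable.integrableOn gauss_integrable.integrableOn]
    exact gauss_total
  have h1 : 1 - Phi x = (Real.sqrt (2 * Real.pi))⁻¹ *
      ∫ t in Set.Ioi x, Real.exp (-t ^ 2 / 2) := by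
    have heq : (∫ t in Set.Iic x, Real.exp (-t ^ 2 / 2)) = Real.sqrt (2 * Real.pi) -
        ∫ t in Set.Ioi x, Real.exp (-t ^ 2 / 2) := by linarith
    rw [Phi, heq, mul_sub, inv_mul_cancel₀ sqrt_two_pi_pos.ne']
    ring
  have hIpos : 0 ≤ ∫ t in Set.Ioi x, Real.exp (-t ^ 2 / 2) :=
    setIntegral_nonneg measurableSet_Ioi fun t _ => (Real.exp_pos _).le
  have hinv : (Real.sqrt (2 * Real.pi))⁻¹ ≤ 1 := by
    rw [inv_le_one_iff₀]; right; exact one_le_sqrt_two_pi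
  have h2 : (∫ t in Set.Ioi x, Real.exp (-t ^ 2 / 2)) ≤
      ∫ t in Set.Ioi x, Real.exp (x ^ 2 / 2) * Real.exp (-x * t) := by
    apply setIntegral_mono_on gauss_integrable.integrableOn
      ((exp_neg_integrableOn_Ioi x hx).const_mul _) measurableSet_Ioi
    intro t ht
    rw [← Real.exp_add]
    apply Real.exp_le_exp.mpr
    nlinarith [sq_nonneg (t - x)]
  have h3 : (∫ t in Set.Ioi x, Real.exp (x ^ 2 / 2) * Real.exp (-x * t))
      = Real.exp (-x ^ 2 / 2) / x := by
    rw [integral_const_mul, integral_exp_neg_mul_Ioi' hx,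
      ← mul_div_assoc, ← Real.exp_add]
    congr 1
    ring
  calc 1 - Phi x = (Real.sqrt (2 * Real.pi))⁻¹ *
        ∫ t in Set.Ioi x, Real.exp (-t ^ 2 / 2) := h1
    _ ≤ 1 * ∫ t in Set.Ioi x, Real.exp (-t ^ 2 / 2) :=
        mul_le_mul_of_nonneg_right hinv hIpos
    _ = ∫ t in Set.Ioi x, Real.exp (-t ^ 2 / 2) := one_mul _
    _ ≤ ∫ t in Set.Ioi x, Real.exp (x ^ 2 / 2) * Real.exp (-x * t) := h2
    _ = Real.exp (-x ^ 2 / 2) / x := h3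

lemma zpow_sum' {ι : Type*} {x : ℝ} (hx : x ≠ 0) (s : Finset ι) (f : ι → ℤ) :
    x ^ (∑ i ∈ s, f i) = ∏ i ∈ s, x ^ f i := by
  induction s using Finset.cons_induction with
  | empty => simp
  | cons i s hi ih => rw [Finset.sum_cons, Finset.prod_cons, zpow_add₀ hx, ih]

/-- Fix `k ≥ 1`, data `aᵢ ∈ (0,∞)`, `zᵢ ∈ {0,1}` and `β > 0`. With `|z| = Σ zᵢ`, as
`α → 0` one has
`ℓ_k(z|a,(α,β)) = O(|log α|^{|z|-k} exp(-(1/(2β²)) Σ (1-zᵢ)(log aᵢ - log α)²))`. -/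
theorem stmt4 (k : ℕ) (hk : 1 ≤ k) (a : Fin k → ℝ) (ha : ∀ i, 0 < a i)
    (z : Fin k → ℕ) (hz : ∀ i, z i = 0 ∨ z i = 1) (β : ℝ) (hβ : 0 < β) :
    ∃ C > (0 : ℝ), ∃ α₀ > (0 : ℝ), ∀ α : ℝ, 0 < α → α < α₀ →
      lik k a z α β ≤ C * |Real.log α| ^ ((∑ i, (z i : ℤ)) - (k : ℤ)) *
        Real.exp (-(∑ i, (1 - (z i : ℝ)) * (Real.log (a i) - Real.log α) ^ 2) /
          (2 * β ^ 2)) := by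
  set M : ℝ := ∑ i, |Real.log (a i)| with hMdef
  have hM0 : 0 ≤ M := Finset.sum_nonneg fun i _ => abs_nonneg _
  have hMi : ∀ i, |Real.log (a i)| ≤ M := by
    intro i
    rw [hMdef]
    exact Finset.single_le_sum (f := fun j => |Real.log (a j)|)
      (fun j _ => abs_nonneg _) (Finset.mem_univ i)
  refine ⟨(2 * β + 1) ^ k, by positivity, Real.exp (-(2 * M + 2 * β + 2)),
    Real.exp_pos _, ?_⟩
  intro α hα hα'
  have hlog : Real.log α < -(2 * M + 2 * β + 2) := by
    calc Real.log α < Real.log (Real.exp (-(2 * M + 2 * β + 2))) :=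
          Real.log_lt_log hα hα'
      _ = -(2 * M + 2 * β + 2) := Real.log_exp _
  set L : ℝ := -Real.log α with hLdef
  have hL : 2 * M + 2 * β + 2 < L := by simp only [hLdef]; linarith
  have hL0 : 0 < L := by linarith
  have habs : |Real.log α| = L := abs_of_neg (by linarith)
  -- per-index quantities
  have hy : ∀ i, L / 2 ≤ Real.log (a i) - Real.log α := by
    intro i
    have := hMi i
    have := abs_le.mp this
    simp only [hLdef] at *
    linarith [this.1]
  have hxpos : ∀ i, 0 < Real.log (a i / α) / β := by
    intro i
    rw [Real.log_div (ha i).ne' hα.ne']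
    exact div_pos (by linarith [hy i]) hβ
  have hxge : ∀ i, L / (2 * β) ≤ Real.log (a i / α) / β := by
    intro i
    rw [Real.log_div (ha i).ne' hα.ne']
    rw [div_le_div_iff₀ (by positivity) hβ]
    have := hy i
    nlinarith
  have hrhs : (2 * β + 1) ^ k * |Real.log α| ^ ((∑ i, (z i : ℤ)) - (k : ℤ)) *
      Real.exp (-(∑ i, (1 - (z i : ℝ)) * (Real.log (a i) - Real.log α) ^ 2) /
        (2 * β ^ 2))
      = ∏ i, (2 * β + 1) * (L ^ ((z i : ℤ) - 1) *
          Real.exp (-((1 - (z i : ℝ)) * (Real.log (a i) - Real.log α) ^ 2) /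
            (2 * β ^ 2))) := by
    rw [Finset.prod_mul_distrib, Finset.prod_const, Finset.card_univ, Fintype.card_fin,
      Finset.prod_mul_distrib, habs, mul_assoc]
    congr 1
    congr 1
    · rw [← zpow_sum' hL0.ne' Finset.univ (fun i => (z i : ℤ) - 1)]
      congr 1
      rw [Finset.sum_sub_distrib, Finset.sum_const, Finset.card_univ, Fintype.card_fin]
      simp
    · rw [← Real.exp_sum]
      congr 1
      rw [← Finset.sum_div, Finset.sum_neg_distrib]
  rw [hrhs, lik]
  apply Finset.prod_le_prod
  · intro i _
    exact mul_nonneg (pow_nonneg (Phi_nonneg _) _)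
      (pow_nonneg (by linarith [Phi_le_one (Real.log (a i / α) / β)]) _)
  · intro i _
    rcases hz i with h0 | h1
    · -- z i = 0
      have hx0 := hxpos i
      have hxg := hxge i
      set x : ℝ := Real.log (a i / α) / β with hxdef
      have key := one_sub_Phi_le hx0
      have hLinv : 0 < L⁻¹ := inv_pos.mpr hL0
      have hinv : x⁻¹ ≤ 2 * β / L := by
        have h1 : (L / (2 * β))⁻¹ = 2 * β / L := by rw [inv_div]
        rw [← h1]
        exact inv_anti₀ (by positivity) hxg
      have hexp : Real.exp (-x ^ 2 / 2) =
          Real.exp (-(Real.log (a i) - Real.log α) ^ 2 / (2 * β ^ 2)) := by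
        congr 1
        rw [hxdef, Real.log_div (ha i).ne' hα.ne', div_pow]
        rw [neg_div, neg_div]
        congr 1
        rw [div_div]
        ring
      simp only [h0, Nat.cast_zero, pow_zero, pow_one, one_mul, zero_sub, zpow_neg_one,
        sub_zero, Nat.sub_zero]
      calc 1 - Phi x ≤ Real.exp (-x ^ 2 / 2) / x := key
        _ = Real.exp (-(Real.log (a i) - Real.log α) ^ 2 / (2 * β ^ 2)) * x⁻¹ := by
            rw [hexp, div_eq_mul_inv]
        _ ≤ Real.exp (-(Real.log (a i) - Real.log α) ^ 2 / (2 * β ^ 2)) * (2 * β / L) :=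
            mul_le_mul_of_nonneg_left hinv (Real.exp_pos _).le
        _ = (2 * β) * (L⁻¹ *
              Real.exp (-(Real.log (a i) - Real.log α) ^ 2 / (2 * β ^ 2))) := by
            rw [div_eq_mul_inv]; ring
        _ ≤ (2 * β + 1) * (L⁻¹ *
              Real.exp (-(Real.log (a i) - Real.log α) ^ 2 / (2 * β ^ 2))) :=
            mul_le_mul_of_nonneg_right (by linarith) (by positivity)
    · -- z i = 1
      have hx0 := hxpos i
      rw [h1]
      norm_num
      calc Phi (Real.log (a i / α) / β) ≤ 1 := Phi_le_one _
        _ ≤ 2 * β + 1 := by linarith
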